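/- arXiv:1809.06558 — 2 statements merged into one kernel-verified Lean document; each statement's English description precedes it below -/
import Mathlib

section
/- The three-dimensional lattice-flow field u₀ : ℝ³ → ℝ³ defined by u₀(x) = ( sin(2πx₁)·sin(2πx₂), cos(2πx₁)·cos(2πx₂), (√2/(2π))·sin(2πx₁)·cos(2πx₂) ) is a generalized Beltrami flow: it satisfies div u₀ = 0 everywhere and its convective term is a gradient, namely (u₀·∇)u₀ = −∇p₀ at every point, where p₀(x) = (1/4)( cos(4πx₁) − cos(4πx₂) ). -/
/-- Partial derivative `∂ᵢ f` of a scalar field on `ℝ³`. -/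
noncomputable def pd3 (i : Fin 3) (f : (Fin 3 → ℝ) → ℝ) (x : Fin 3 → ℝ) : ℝ :=
  fderiv ℝ f x (Pi.single i 1)

/-- The 3D lattice-flow velocity field
`u₀(x) = (sin(2πx₁)sin(2πx₂), cos(2πx₁)cos(2πx₂), (√2/(2π))·sin(2πx₁)cos(2πx₂))`. -/
noncomputable def lattice3U0 (x : Fin 3 → ℝ) : Fin 3 → ℝ :=
  ![Real.sin (2 * Real.pi * x 0) * Real.sin (2 * Real.pi * x 1),
    Real.cos (2 * Real.pi * x 0) * Real.cos (2 * Real.pi * x 1),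
    (Real.sqrt 2 / (2 * Real.pi)) * Real.sin (2 * Real.pi * x 0) * Real.cos (2 * Real.pi * x 1)]

/-- The pressure `p₀(x) = (1/4)(cos(4πx₁) − cos(4πx₂))`. -/
noncomputable def lattice3P0 (x : Fin 3 → ℝ) : ℝ :=
  (1 / 4) * (Real.cos (4 * Real.pi * x 0) - Real.cos (4 * Real.pi * x 1))

lemma hasFDerivAt_sin_c (c : ℝ) (i : Fin 3) (x : Fin 3 → ℝ) :
    HasFDerivAt (fun y : Fin 3 → ℝ => Real.sin (c * y i))
      ((c * Real.cos (c * x i)) • (ContinuousLinearMap.proj i : (Fin 3 → ℝ) →L[ℝ] ℝ)) x := by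
  have h1 : HasDerivAt (fun t : ℝ => Real.sin (c * t)) (c * Real.cos (c * x i)) (x i) := by
    have := (Real.hasDerivAt_sin (c * x i)).comp (x i)
      ((hasDerivAt_id (x i)).const_mul c)
    simpa [mul_comm, Function.comp_def] using this
  exact h1.comp_hasFDerivAt x ((ContinuousLinearMap.proj i : (Fin 3 → ℝ) →L[ℝ] ℝ).hasFDerivAt)

lemma hasFDerivAt_cos_c (c : ℝ) (i : Fin 3) (x : Fin 3 → ℝ) :
    HasFDerivAt (fun y : Fin 3 → ℝ => Real.cos (c * y i))
      ((-(c * Real.sin (c * x i))) • (ContinuousLinearMap.proj i : (Fin 3 → ℝ) →L[ℝ] ℝ)) x := by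
  have h1 : HasDerivAt (fun t : ℝ => Real.cos (c * t)) (-(c * Real.sin (c * x i))) (x i) := by
    have := (Real.hasDerivAt_cos (c * x i)).comp (x i)
      ((hasDerivAt_id (x i)).const_mul c)
    simpa [mul_comm, Function.comp_def] using this
  exact h1.comp_hasFDerivAt x ((ContinuousLinearMap.proj i : (Fin 3 → ℝ) →L[ℝ] ℝ).hasFDerivAt)

lemma pd3_eq {f : (Fin 3 → ℝ) → ℝ} {L : (Fin 3 → ℝ) →L[ℝ] ℝ} {x : Fin 3 → ℝ}
    (h : HasFDerivAt f L x) (j : Fin 3) : pd3 j f x = L (Pi.single j 1) := by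
  rw [pd3, h.fderiv]

/-- the 3D lattice flow is a generalized Beltrami flow:
`div u₀ = 0` everywhere and the convective term is a gradient,
`(u₀·∇)u₀ = −∇p₀` at every point. -/
theorem lattice3_generalized_beltrami :
    (∀ x : Fin 3 → ℝ, (∑ i : Fin 3, pd3 i (fun y => lattice3U0 y i) x) = 0) ∧
    (∀ (x : Fin 3 → ℝ) (i : Fin 3),
      (∑ j : Fin 3, lattice3U0 x j * pd3 j (fun y => lattice3U0 y i) x)
        = -pd3 i lattice3P0 x) := by
  set c : ℝ := 2 * Real.pi with hc
  have pi_ne : Real.pi ≠ 0 := Real.pi_ne_zero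
  -- derivatives of the three components
  have h0 : ∀ x : Fin 3 → ℝ, HasFDerivAt (fun y : Fin 3 → ℝ =>
      Real.sin (c * y 0) * Real.sin (c * y 1))
      (Real.sin (c * x 0) • ((c * Real.cos (c * x 1)) • (ContinuousLinearMap.proj 1 : (Fin 3 → ℝ) →L[ℝ] ℝ))
        + Real.sin (c * x 1) • ((c * Real.cos (c * x 0)) • (ContinuousLinearMap.proj 0 : (Fin 3 → ℝ) →L[ℝ] ℝ))) x :=
    fun x => (hasFDerivAt_sin_c c 0 x).mul (hasFDerivAt_sin_c c 1 x)
  have h1 : ∀ x : Fin 3 → ℝ, HasFDerivAt (fun y : Fin 3 → ℝ =>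
      Real.cos (c * y 0) * Real.cos (c * y 1))
      (Real.cos (c * x 0) • ((-(c * Real.sin (c * x 1))) • (ContinuousLinearMap.proj 1 : (Fin 3 → ℝ) →L[ℝ] ℝ))
        + Real.cos (c * x 1) • ((-(c * Real.sin (c * x 0))) • (ContinuousLinearMap.proj 0 : (Fin 3 → ℝ) →L[ℝ] ℝ))) x :=
    fun x => (hasFDerivAt_cos_c c 0 x).mul (hasFDerivAt_cos_c c 1 x)
  have h2 : ∀ x : Fin 3 → ℝ, HasFDerivAt (fun y : Fin 3 → ℝ =>
      Real.sqrt 2 / c * Real.sin (c * y 0) * Real.cos (c * y 1))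
      ((Real.sqrt 2 / c * Real.sin (c * x 0)) • ((-(c * Real.sin (c * x 1))) • (ContinuousLinearMap.proj 1 : (Fin 3 → ℝ) →L[ℝ] ℝ))
        + Real.cos (c * x 1) • ((Real.sqrt 2 / c) • ((c * Real.cos (c * x 0)) • (ContinuousLinearMap.proj 0 : (Fin 3 → ℝ) →L[ℝ] ℝ)))) x :=
    fun x => ((hasFDerivAt_sin_c c 0 x).const_mul (Real.sqrt 2 / c)).mul (hasFDerivAt_cos_c c 1 x)
  have hp : ∀ x : Fin 3 → ℝ, HasFDerivAt lattice3P0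
      ((1/4 : ℝ) • (((-(4 * Real.pi * Real.sin (4 * Real.pi * x 0))) • (ContinuousLinearMap.proj 0 : (Fin 3 → ℝ) →L[ℝ] ℝ))
        - ((-(4 * Real.pi * Real.sin (4 * Real.pi * x 1))) • (ContinuousLinearMap.proj 1 : (Fin 3 → ℝ) →L[ℝ] ℝ)))) x := by
    intro x
    exact ((hasFDerivAt_cos_c (4 * Real.pi) 0 x).sub (hasFDerivAt_cos_c (4 * Real.pi) 1 x)).const_mul (1/4 : ℝ)
  constructor
  · intro x
    simp only [lattice3U0, Fin.sum_univ_three, Matrix.cons_val_zero, Matrix.cons_val_one,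
      Matrix.head_cons, Matrix.cons_val_two, Matrix.tail_cons]
    rw [pd3_eq (h0 x) 0, pd3_eq (h1 x) 1, pd3_eq (h2 x) 2]
    simp [Pi.single_apply]
    ring
  · intro x i
    have hs0 := Real.sin_sq_add_cos_sq (c * x 0)
    have hd0 : Real.sin (4 * Real.pi * x 0) = 2 * Real.sin (c * x 0) * Real.cos (c * x 0) := by
      have : (4 : ℝ) * Real.pi * x 0 = 2 * (c * x 0) := by rw [hc]; ring
      rw [this, Real.sin_two_mul]
    have hs1 := Real.sin_sq_add_cos_sq (c * x 1)
    have hd1 : Real.sin (4 * Real.pi * x 1) = 2 * Real.sin (c * x 1) * Real.cos (c * x 1) := by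
      have : (4 : ℝ) * Real.pi * x 1 = 2 * (c * x 1) := by rw [hc]; ring
      rw [this, Real.sin_two_mul]
    fin_cases i <;>
      simp only [Fin.zero_eta, Fin.mk_one, Fin.isValue, Fin.reduceFinMk, lattice3U0,
        Fin.sum_univ_three, Matrix.cons_val_zero, Matrix.cons_val_one,
        Matrix.head_cons, Matrix.cons_val_two, Matrix.tail_cons]
    · rw [pd3_eq (h0 x) 0, pd3_eq (h0 x) 1, pd3_eq (h0 x) 2, pd3_eq (hp x) 0]
      simp [Pi.single_apply]
      rw [hc] at hs1 hd0 ⊢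
      linear_combination (2 * Real.pi * Real.sin (2 * Real.pi * x 0) * Real.cos (2 * Real.pi * x 0)) * hs1 - Real.pi * hd0
    · rw [pd3_eq (h1 x) 0, pd3_eq (h1 x) 1, pd3_eq (h1 x) 2, pd3_eq (hp x) 1]
      simp [Pi.single_apply]
      rw [hc] at hs0 hd1 ⊢
      linear_combination (-(2 * Real.pi * Real.sin (2 * Real.pi * x 1) * Real.cos (2 * Real.pi * x 1))) * hs0 + Real.pi * hd1
    · rw [pd3_eq (h2 x) 0, pd3_eq (h2 x) 1, pd3_eq (h2 x) 2, pd3_eq (hp x) 2]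
      simp [Pi.single_apply]
      ring
end

section
/- For every ν ≥ 0, the field u(t,x) = e^{−8π²νt}·u₀(x) with u₀(x) = ( sin(2πx₁)·sin(2πx₂), cos(2πx₁)·cos(2πx₂), (√2/(2π))·sin(2πx₁)·cos(2πx₂) ), together with the pressure p(t,x) = e^{−16π²νt}·(1/4)( cos(4πx₁) − cos(4πx₂) ), is a classical solution of the three-dimensional incompressible Navier–Stokes equations with zero force on ℝ × ℝ³: at every (t,x) one has ∂ₜu − νΔu + (u·∇)u + ∇p = 0 and div u = 0. -/
/-- The decaying 3D lattice flow `u(t,x) = e^{−8π²νt}·u₀(x)`. -/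
noncomputable def lattice3U (ν t : ℝ) (x : Fin 3 → ℝ) : Fin 3 → ℝ :=
  fun i => Real.exp (-8 * Real.pi ^ 2 * ν * t) * lattice3U0 x i

/-- The associated pressure `p(t,x) = e^{−16π²νt}·p₀(x)`. -/
noncomputable def lattice3P (ν t : ℝ) (x : Fin 3 → ℝ) : ℝ :=
  Real.exp (-16 * Real.pi ^ 2 * ν * t) * lattice3P0 x

noncomputable def Sf (s : ℝ) : ℝ := Real.sin (2 * Real.pi * s)
noncomputable def Cf (s : ℝ) : ℝ := Real.cos (2 * Real.pi * s)
noncomputable def C4 (s : ℝ) : ℝ := Real.cos (4 * Real.pi * s)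

lemma hdS (s : ℝ) : HasDerivAt Sf (2 * Real.pi * Cf s) s := by
  unfold Sf Cf
  have h := ((hasDerivAt_id s).const_mul (2 * Real.pi)).sin
  convert h using 1
  simp only [id_eq]
  simp only [id]
  ring

lemma hdC (s : ℝ) : HasDerivAt Cf (-(2 * Real.pi * Sf s)) s := by
  unfold Sf Cf
  have h := ((hasDerivAt_id s).const_mul (2 * Real.pi)).cos
  convert h using 1
  simp only [id_eq]
  simp only [id]
  ring

lemma hdC4 (s : ℝ) : HasDerivAt C4 (-(4 * Real.pi * (2 * Sf s * Cf s))) s := by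
  unfold C4
  have h := ((hasDerivAt_id s).const_mul (4 * Real.pi)).cos
  have h2 : Real.sin (4 * Real.pi * s) = 2 * Sf s * Cf s := by
    have e1 : 4 * Real.pi * s = 2 * (2 * Real.pi * s) := by ring
    rw [e1, Real.sin_two_mul]; rfl
  convert h using 1
  simp only [id_eq]
  simp only [id]
  rw [h2]
  ring

lemma core (c : ℝ) {f g : ℝ → ℝ} {f' g' : ℝ} (x : Fin 3 → ℝ)
    (hf : HasDerivAt f f' (x 0)) (hg : HasDerivAt g g' (x 1)) :
    HasFDerivAt (fun y : Fin 3 → ℝ => c * f (y 0) * g (y 1))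
      ((c * f' * g (x 1)) • (ContinuousLinearMap.proj 0 : (Fin 3 → ℝ) →L[ℝ] ℝ)
        + (c * f (x 0) * g') • (ContinuousLinearMap.proj 1 : (Fin 3 → ℝ) →L[ℝ] ℝ)) x := by
  have h0 : HasFDerivAt (fun y : Fin 3 → ℝ => y 0)
      (ContinuousLinearMap.proj 0 : (Fin 3 → ℝ) →L[ℝ] ℝ) x :=
    (ContinuousLinearMap.proj 0 : (Fin 3 → ℝ) →L[ℝ] ℝ).hasFDerivAt
  have h1 : HasFDerivAt (fun y : Fin 3 → ℝ => y 1)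
      (ContinuousLinearMap.proj 1 : (Fin 3 → ℝ) →L[ℝ] ℝ) x :=
    (ContinuousLinearMap.proj 1 : (Fin 3 → ℝ) →L[ℝ] ℝ).hasFDerivAt
  have hF : HasFDerivAt (fun y : Fin 3 → ℝ => f (y 0))
      (f' • (ContinuousLinearMap.proj 0 : (Fin 3 → ℝ) →L[ℝ] ℝ)) x :=
    hf.comp_hasFDerivAt x h0
  have hG : HasFDerivAt (fun y : Fin 3 → ℝ => g (y 1))
      (g' • (ContinuousLinearMap.proj 1 : (Fin 3 → ℝ) →L[ℝ] ℝ)) x :=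
    hg.comp_hasFDerivAt x h1
  have h := (hF.const_mul c).mul hG
  refine h.congr_fderiv ?_
  ext v
  simp
  ring

lemma core_add (a b : ℝ) {f g : ℝ → ℝ} {f' g' : ℝ} (x : Fin 3 → ℝ)
    (hf : HasDerivAt f f' (x 0)) (hg : HasDerivAt g g' (x 1)) :
    HasFDerivAt (fun y : Fin 3 → ℝ => a * f (y 0) + b * g (y 1))
      ((a * f') • (ContinuousLinearMap.proj 0 : (Fin 3 → ℝ) →L[ℝ] ℝ)
        + (b * g') • (ContinuousLinearMap.proj 1 : (Fin 3 → ℝ) →L[ℝ] ℝ)) x := by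
  have h0 : HasFDerivAt (fun y : Fin 3 → ℝ => y 0)
      (ContinuousLinearMap.proj 0 : (Fin 3 → ℝ) →L[ℝ] ℝ) x :=
    (ContinuousLinearMap.proj 0 : (Fin 3 → ℝ) →L[ℝ] ℝ).hasFDerivAt
  have h1 : HasFDerivAt (fun y : Fin 3 → ℝ => y 1)
      (ContinuousLinearMap.proj 1 : (Fin 3 → ℝ) →L[ℝ] ℝ) x :=
    (ContinuousLinearMap.proj 1 : (Fin 3 → ℝ) →L[ℝ] ℝ).hasFDerivAt
  have hF := hf.comp_hasFDerivAt x h0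
  have hG := hg.comp_hasFDerivAt x h1
  have h := (hF.const_mul a).add (hG.const_mul b)
  refine h.congr_fderiv ?_
  ext v
  simp
  ring

lemma pd3_eval (j : Fin 3) (c : ℝ) {f g : ℝ → ℝ} {f' g' : ℝ} (x : Fin 3 → ℝ)
    (hf : HasDerivAt f f' (x 0)) (hg : HasDerivAt g g' (x 1)) :
    pd3 j (fun y => c * f (y 0) * g (y 1)) x
      = c * f' * g (x 1) * ((Pi.single j 1 : Fin 3 → ℝ) 0)
        + c * f (x 0) * g' * ((Pi.single j 1 : Fin 3 → ℝ) 1) := by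
  have h := (core c x hf hg).fderiv
  simp only [pd3, h]
  simp [mul_comm]

lemma pd3_eval0 (c : ℝ) {f g : ℝ → ℝ} {f' g' : ℝ} (x : Fin 3 → ℝ)
    (hf : HasDerivAt f f' (x 0)) (hg : HasDerivAt g g' (x 1)) :
    pd3 0 (fun y => c * f (y 0) * g (y 1)) x = c * f' * g (x 1) := by
  rw [pd3_eval 0 c x hf hg]; simp

lemma pd3_eval1 (c : ℝ) {f g : ℝ → ℝ} {f' g' : ℝ} (x : Fin 3 → ℝ)
    (hf : HasDerivAt f f' (x 0)) (hg : HasDerivAt g g' (x 1)) :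
    pd3 1 (fun y => c * f (y 0) * g (y 1)) x = c * f (x 0) * g' := by
  rw [pd3_eval 1 c x hf hg]; simp

lemma pd3_eval2 (c : ℝ) {f g : ℝ → ℝ} {f' g' : ℝ} (x : Fin 3 → ℝ)
    (hf : HasDerivAt f f' (x 0)) (hg : HasDerivAt g g' (x 1)) :
    pd3 2 (fun y => c * f (y 0) * g (y 1)) x = 0 := by
  rw [pd3_eval 2 c x hf hg]; simp

lemma pd3_add_eval (j : Fin 3) (a b : ℝ) {f g : ℝ → ℝ} {f' g' : ℝ} (x : Fin 3 → ℝ)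
    (hf : HasDerivAt f f' (x 0)) (hg : HasDerivAt g g' (x 1)) :
    pd3 j (fun y => a * f (y 0) + b * g (y 1)) x
      = a * f' * ((Pi.single j 1 : Fin 3 → ℝ) 0)
        + b * g' * ((Pi.single j 1 : Fin 3 → ℝ) 1) := by
  have h := (core_add a b x hf hg).fderiv
  simp only [pd3, h]
  simp [mul_comm]

lemma pd3_add_eval0 (a b : ℝ) {f g : ℝ → ℝ} {f' g' : ℝ} (x : Fin 3 → ℝ)
    (hf : HasDerivAt f f' (x 0)) (hg : HasDerivAt g g' (x 1)) :
    pd3 0 (fun y => a * f (y 0) + b * g (y 1)) x = a * f' := by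
  rw [pd3_add_eval 0 a b x hf hg]; simp

lemma pd3_add_eval1 (a b : ℝ) {f g : ℝ → ℝ} {f' g' : ℝ} (x : Fin 3 → ℝ)
    (hf : HasDerivAt f f' (x 0)) (hg : HasDerivAt g g' (x 1)) :
    pd3 1 (fun y => a * f (y 0) + b * g (y 1)) x = b * g' := by
  rw [pd3_add_eval 1 a b x hf hg]; simp

lemma pd3_add_eval2 (a b : ℝ) {f g : ℝ → ℝ} {f' g' : ℝ} (x : Fin 3 → ℝ)
    (hf : HasDerivAt f f' (x 0)) (hg : HasDerivAt g g' (x 1)) :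
    pd3 2 (fun y => a * f (y 0) + b * g (y 1)) x = 0 := by
  rw [pd3_add_eval 2 a b x hf hg]; simp

lemma pd3_zero (j : Fin 3) (x : Fin 3 → ℝ) : pd3 j (fun _ => (0:ℝ)) x = 0 := by
  simp [pd3]

lemma deriv_time (a b t : ℝ) :
    deriv (fun s => Real.exp (a * s) * b) t = a * Real.exp (a * t) * b := by
  have h := (((hasDerivAt_id t).const_mul a).exp).mul_const b
  simp only [id_eq] at h
  rw [h.deriv]; ring

/-- for every `ν ≥ 0`, the decaying 3D lattice flow, together with the
pressure `p`, is a classical solution of the 3D incompressible Navier–Stokes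
equations with zero force: `∂ₜu − νΔu + (u·∇)u + ∇p = 0` and `div u = 0`. -/
theorem lattice3_solves_navier_stokes (ν : ℝ) (hν : 0 ≤ ν) :
    (∀ (t : ℝ) (x : Fin 3 → ℝ) (i : Fin 3),
      deriv (fun s => lattice3U ν s x i) t
        - ν * (∑ j : Fin 3, pd3 j (fun y => pd3 j (fun z => lattice3U ν t z i) y) x)
        + (∑ j : Fin 3, lattice3U ν t x j * pd3 j (fun y => lattice3U ν t y i) x)
        + pd3 i (lattice3P ν t) x = 0) ∧
    (∀ (t : ℝ) (x : Fin 3 → ℝ),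
      (∑ i : Fin 3, pd3 i (fun y => lattice3U ν t y i) x) = 0) := by

  constructor
  · intro t x i
    set E0 := Real.exp (-8 * Real.pi ^ 2 * ν * t) with hE0
    have hE2 : Real.exp (-16 * Real.pi ^ 2 * ν * t) = E0 * E0 := by
      rw [hE0, ← Real.exp_add]; congr 1; ring
    have py0 : Sf (x 0) ^ 2 + Cf (x 0) ^ 2 = 1 := by
      simpa [Sf, Cf] using Real.sin_sq_add_cos_sq (2 * Real.pi * x 0)
    have py1 : Sf (x 1) ^ 2 + Cf (x 1) ^ 2 = 1 := by
      simpa [Sf, Cf] using Real.sin_sq_add_cos_sq (2 * Real.pi * x 1)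
    have hv0 : lattice3U0 x 0 = Sf (x 0) * Sf (x 1) := by simp [lattice3U0, Sf]
    have hv1 : lattice3U0 x 1 = Cf (x 0) * Cf (x 1) := by simp [lattice3U0, Cf]
    have hv2 : lattice3U0 x 2
        = (Real.sqrt 2 / (2 * Real.pi)) * Sf (x 0) * Cf (x 1) := by
      simp [lattice3U0, Sf, Cf]
    have h0 : (fun y : Fin 3 → ℝ => lattice3U ν t y 0)
        = (fun y => E0 * Sf (y 0) * Sf (y 1)) := by
      funext y; rw [hE0]; show Real.exp _ * lattice3U0 y 0 = _
      simp [lattice3U0, Sf]; ring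
    have h1 : (fun y : Fin 3 → ℝ => lattice3U ν t y 1)
        = (fun y => E0 * Cf (y 0) * Cf (y 1)) := by
      funext y; rw [hE0]; show Real.exp _ * lattice3U0 y 1 = _
      simp [lattice3U0, Cf]; ring
    have h2 : (fun y : Fin 3 → ℝ => lattice3U ν t y 2)
        = (fun y => (E0 * (Real.sqrt 2 / (2 * Real.pi))) * Sf (y 0) * Cf (y 1)) := by
      funext y; rw [hE0]; show Real.exp _ * lattice3U0 y 2 = _
      simp [lattice3U0, Sf, Cf]; ring
    have hU0 : lattice3U ν t x 0 = E0 * Sf (x 0) * Sf (x 1) := congrFun h0 x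
    have hU1 : lattice3U ν t x 1 = E0 * Cf (x 0) * Cf (x 1) := congrFun h1 x
    have hU2 : lattice3U ν t x 2
        = (E0 * (Real.sqrt 2 / (2 * Real.pi))) * Sf (x 0) * Cf (x 1) := congrFun h2 x
    have h_p : lattice3P ν t
        = (fun y => (Real.exp (-16 * Real.pi ^ 2 * ν * t) * (1 / 4)) * C4 (y 0)
            + (-(Real.exp (-16 * Real.pi ^ 2 * ν * t) * (1 / 4))) * C4 (y 1)) := by
      funext y; simp [lattice3P, lattice3P0, C4]; ring
    have key0 : deriv (fun s => lattice3U ν s x 0) t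
        - ν * (∑ j : Fin 3, pd3 j (fun y => pd3 j (fun z => lattice3U ν t z 0) y) x)
        + (∑ j : Fin 3, lattice3U ν t x j * pd3 j (fun y => lattice3U ν t y 0) x)
        + pd3 0 (lattice3P ν t) x = 0 := by
      have hD : deriv (fun s => lattice3U ν s x 0) t
          = (-8 * Real.pi ^ 2 * ν) * E0 * (Sf (x 0) * Sf (x 1)) := by
        have hfun : (fun s => lattice3U ν s x 0)
            = (fun s => Real.exp ((-8 * Real.pi ^ 2 * ν) * s) * lattice3U0 x 0) := rfl
        rw [hfun, deriv_time, hv0, hE0]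
      have dd0 : (fun y => pd3 0 (fun z => E0 * Sf (z 0) * Sf (z 1)) y)
          = (fun y => (E0 * (2 * Real.pi)) * Cf (y 0) * Sf (y 1)) := by
        funext y; rw [pd3_eval0 E0 y (hdS (y 0)) (hdS (y 1))]; ring
      have dd1 : (fun y => pd3 1 (fun z => E0 * Sf (z 0) * Sf (z 1)) y)
          = (fun y => (E0 * (2 * Real.pi)) * Sf (y 0) * Cf (y 1)) := by
        funext y; rw [pd3_eval1 E0 y (hdS (y 0)) (hdS (y 1))]; ring
      have dd2 : (fun y => pd3 2 (fun z => E0 * Sf (z 0) * Sf (z 1)) y)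
          = (fun _ => (0:ℝ)) := by
        funext y; rw [pd3_eval2 E0 y (hdS (y 0)) (hdS (y 1))]
      rw [Fin.sum_univ_three, Fin.sum_univ_three, h0, dd0, dd1, dd2, pd3_zero,
        pd3_eval0 (E0 * (2 * Real.pi)) x (hdC (x 0)) (hdS (x 1)),
        pd3_eval1 (E0 * (2 * Real.pi)) x (hdS (x 0)) (hdC (x 1)),
        pd3_eval0 E0 x (hdS (x 0)) (hdS (x 1)),
        pd3_eval1 E0 x (hdS (x 0)) (hdS (x 1)),
        pd3_eval2 E0 x (hdS (x 0)) (hdS (x 1)),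
        hU0, hU1, hU2, h_p,
        pd3_add_eval0 (Real.exp (-16 * Real.pi ^ 2 * ν * t) * (1 / 4))
          (-(Real.exp (-16 * Real.pi ^ 2 * ν * t) * (1 / 4))) x (hdC4 (x 0)) (hdC4 (x 1)),
        hD]
      linear_combination (2 * Real.pi * E0 * E0 * Sf (x 0) * Cf (x 0)) * py1
        - (2 * Real.pi * Sf (x 0) * Cf (x 0)) * hE2
    have key1 : deriv (fun s => lattice3U ν s x 1) t
        - ν * (∑ j : Fin 3, pd3 j (fun y => pd3 j (fun z => lattice3U ν t z 1) y) x)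
        + (∑ j : Fin 3, lattice3U ν t x j * pd3 j (fun y => lattice3U ν t y 1) x)
        + pd3 1 (lattice3P ν t) x = 0 := by
      have hD : deriv (fun s => lattice3U ν s x 1) t
          = (-8 * Real.pi ^ 2 * ν) * E0 * (Cf (x 0) * Cf (x 1)) := by
        have hfun : (fun s => lattice3U ν s x 1)
            = (fun s => Real.exp ((-8 * Real.pi ^ 2 * ν) * s) * lattice3U0 x 1) := rfl
        rw [hfun, deriv_time, hv1, hE0]
      have dd0 : (fun y => pd3 0 (fun z => E0 * Cf (z 0) * Cf (z 1)) y)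
          = (fun y => (-(E0 * (2 * Real.pi))) * Sf (y 0) * Cf (y 1)) := by
        funext y; rw [pd3_eval0 E0 y (hdC (y 0)) (hdC (y 1))]; ring
      have dd1 : (fun y => pd3 1 (fun z => E0 * Cf (z 0) * Cf (z 1)) y)
          = (fun y => (-(E0 * (2 * Real.pi))) * Cf (y 0) * Sf (y 1)) := by
        funext y; rw [pd3_eval1 E0 y (hdC (y 0)) (hdC (y 1))]; ring
      have dd2 : (fun y => pd3 2 (fun z => E0 * Cf (z 0) * Cf (z 1)) y)
          = (fun _ => (0:ℝ)) := by
        funext y; rw [pd3_eval2 E0 y (hdC (y 0)) (hdC (y 1))]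
      rw [Fin.sum_univ_three, Fin.sum_univ_three, h1, dd0, dd1, dd2, pd3_zero,
        pd3_eval0 (-(E0 * (2 * Real.pi))) x (hdS (x 0)) (hdC (x 1)),
        pd3_eval1 (-(E0 * (2 * Real.pi))) x (hdC (x 0)) (hdS (x 1)),
        pd3_eval0 E0 x (hdC (x 0)) (hdC (x 1)),
        pd3_eval1 E0 x (hdC (x 0)) (hdC (x 1)),
        pd3_eval2 E0 x (hdC (x 0)) (hdC (x 1)),
        hU0, hU1, hU2, h_p,
        pd3_add_eval1 (Real.exp (-16 * Real.pi ^ 2 * ν * t) * (1 / 4))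
          (-(Real.exp (-16 * Real.pi ^ 2 * ν * t) * (1 / 4))) x (hdC4 (x 0)) (hdC4 (x 1)),
        hD]
      linear_combination (-(2 * Real.pi) * E0 * E0 * Sf (x 1) * Cf (x 1)) * py0
        + (2 * Real.pi * Sf (x 1) * Cf (x 1)) * hE2
    have key2 : deriv (fun s => lattice3U ν s x 2) t
        - ν * (∑ j : Fin 3, pd3 j (fun y => pd3 j (fun z => lattice3U ν t z 2) y) x)
        + (∑ j : Fin 3, lattice3U ν t x j * pd3 j (fun y => lattice3U ν t y 2) x)
        + pd3 2 (lattice3P ν t) x = 0 := by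
      have hD : deriv (fun s => lattice3U ν s x 2) t
          = (-8 * Real.pi ^ 2 * ν) * E0
              * ((Real.sqrt 2 / (2 * Real.pi)) * Sf (x 0) * Cf (x 1)) := by
        have hfun : (fun s => lattice3U ν s x 2)
            = (fun s => Real.exp ((-8 * Real.pi ^ 2 * ν) * s) * lattice3U0 x 2) := rfl
        rw [hfun, deriv_time, hv2, hE0]
      have dd0 : (fun y => pd3 0 (fun z => (E0 * (Real.sqrt 2 / (2 * Real.pi))) * Sf (z 0) * Cf (z 1)) y)
          = (fun y => ((E0 * (Real.sqrt 2 / (2 * Real.pi))) * (2 * Real.pi)) * Cf (y 0) * Cf (y 1)) := by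
        funext y
        rw [pd3_eval0 (E0 * (Real.sqrt 2 / (2 * Real.pi))) y (hdS (y 0)) (hdC (y 1))]; ring
      have dd1 : (fun y => pd3 1 (fun z => (E0 * (Real.sqrt 2 / (2 * Real.pi))) * Sf (z 0) * Cf (z 1)) y)
          = (fun y => (-((E0 * (Real.sqrt 2 / (2 * Real.pi))) * (2 * Real.pi))) * Sf (y 0) * Sf (y 1)) := by
        funext y
        rw [pd3_eval1 (E0 * (Real.sqrt 2 / (2 * Real.pi))) y (hdS (y 0)) (hdC (y 1))]; ring
      have dd2 : (fun y => pd3 2 (fun z => (E0 * (Real.sqrt 2 / (2 * Real.pi))) * Sf (z 0) * Cf (z 1)) y)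
          = (fun _ => (0:ℝ)) := by
        funext y
        rw [pd3_eval2 (E0 * (Real.sqrt 2 / (2 * Real.pi))) y (hdS (y 0)) (hdC (y 1))]
      rw [Fin.sum_univ_three, Fin.sum_univ_three, h2, dd0, dd1, dd2, pd3_zero,
        pd3_eval0 ((E0 * (Real.sqrt 2 / (2 * Real.pi))) * (2 * Real.pi)) x (hdC (x 0)) (hdC (x 1)),
        pd3_eval1 (-((E0 * (Real.sqrt 2 / (2 * Real.pi))) * (2 * Real.pi))) x (hdS (x 0)) (hdS (x 1)),
        pd3_eval0 (E0 * (Real.sqrt 2 / (2 * Real.pi))) x (hdS (x 0)) (hdC (x 1)),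
        pd3_eval1 (E0 * (Real.sqrt 2 / (2 * Real.pi))) x (hdS (x 0)) (hdC (x 1)),
        pd3_eval2 (E0 * (Real.sqrt 2 / (2 * Real.pi))) x (hdS (x 0)) (hdC (x 1)),
        hU0, hU1, hU2, h_p,
        pd3_add_eval2 (Real.exp (-16 * Real.pi ^ 2 * ν * t) * (1 / 4))
          (-(Real.exp (-16 * Real.pi ^ 2 * ν * t) * (1 / 4))) x (hdC4 (x 0)) (hdC4 (x 1)),
        hD]
      ring
    fin_cases i
    · exact key0
    · exact key1
    · exact key2
  · intro t x
    set E0 := Real.exp (-8 * Real.pi ^ 2 * ν * t) with hE0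
    have h0 : (fun y : Fin 3 → ℝ => lattice3U ν t y 0)
        = (fun y => E0 * Sf (y 0) * Sf (y 1)) := by
      funext y; rw [hE0]; show Real.exp _ * lattice3U0 y 0 = _
      simp [lattice3U0, Sf]; ring
    have h1 : (fun y : Fin 3 → ℝ => lattice3U ν t y 1)
        = (fun y => E0 * Cf (y 0) * Cf (y 1)) := by
      funext y; rw [hE0]; show Real.exp _ * lattice3U0 y 1 = _
      simp [lattice3U0, Cf]; ring
    have h2 : (fun y : Fin 3 → ℝ => lattice3U ν t y 2)
        = (fun y => (E0 * (Real.sqrt 2 / (2 * Real.pi))) * Sf (y 0) * Cf (y 1)) := by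
      funext y; rw [hE0]; show Real.exp _ * lattice3U0 y 2 = _
      simp [lattice3U0, Sf, Cf]; ring
    rw [Fin.sum_univ_three, h0, h1, h2,
      pd3_eval0 E0 x (hdS (x 0)) (hdS (x 1)),
      pd3_eval1 E0 x (hdC (x 0)) (hdC (x 1)),
      pd3_eval2 (E0 * (Real.sqrt 2 / (2 * Real.pi))) x (hdS (x 0)) (hdC (x 1))]
    ring
end
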